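/- Let n be an odd positive integer. For the Hadamard walk on the n-cycle, for every unit initial state ψ₀ and every node v ∈ ℤ/nℤ, the time-averaged node distribution converges to the uniform distribution: lim_{T→∞} (1/T)·Σ_{t=0}^{T−1} P_t(v | ψ₀) = 1/n, independently of the initial state ψ₀. -/

import Mathlib

open Filter Topology

/-- One step of the Hadamard walk on the n-cycle: states are `ψ : ZMod n → ℂ × ℂ` with
`ψ v = (ψ_L v, ψ_R v)`, and `ψ'_L(v) = (ψ_R(v+1) − ψ_L(v+1))/√2`,
`ψ'_R(v) = (ψ_R(v−1) + ψ_L(v−1))/√2`. -/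
noncomputable def cycleHadamardStep (n : ℕ) (ψ : ZMod n → ℂ × ℂ) : ZMod n → ℂ × ℂ :=
  fun v =>
    (((ψ (v + 1)).2 - (ψ (v + 1)).1) / (Real.sqrt 2 : ℂ),
     ((ψ (v - 1)).2 + (ψ (v - 1)).1) / (Real.sqrt 2 : ℂ))

namespace CHW

open Complex

set_option linter.unusedSectionVars false

variable (n : ℕ) [NeZero n]

noncomputable def om : ℂ := Complex.exp (2 * Real.pi * I / n)

noncomputable def chi (m : ZMod n) : ℂ := om n ^ m.val

noncomputable def tau (k : ZMod n) : ℝ := Real.sqrt 2 * (chi n k).im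

noncomputable def cc (k : ZMod n) : ℝ := Real.sqrt (1 - (tau n k)^2/4)

noncomputable def lam (j : ZMod n × Bool) : ℂ :=
  ((if j.2 then -(cc n j.1) else (cc n j.1) : ℝ) : ℂ) - ((tau n j.1)/2 : ℝ) * I

noncomputable def tr (k : ZMod n) : ℂ := ((starRingEnd ℂ) (chi n k) - chi n k) / (Real.sqrt 2 : ℂ)

noncomputable def spin : ZMod n × Bool → ℂ × ℂ
  | (k, false) => (chi n k, (Real.sqrt 2 : ℂ) * lam n (k, false) + chi n k)
  | (k, true) => (-(starRingEnd ℂ) ((Real.sqrt 2 : ℂ) * lam n (k, false) + chi n k),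
               (starRingEnd ℂ) (chi n k))

noncomputable def vec (j : ZMod n × Bool) : ZMod n → ℂ × ℂ := fun v => chi n (j.1 * v) • spin n j

noncomputable def mm (j : ZMod n × Bool) : ℝ := normSq (spin n j).1 + normSq (spin n j).2

noncomputable def inn (φ ψ : ZMod n → ℂ × ℂ) : ℂ :=
  ∑ v : ZMod n, ((starRingEnd ℂ) (φ v).1 * (ψ v).1 + (starRingEnd ℂ) (φ v).2 * (ψ v).2)

noncomputable def coef (ψ₀ : ZMod n → ℂ × ℂ) (j : ZMod n × Bool) : ℂ :=
  inn n (vec n j) ψ₀ / (n * mm n j)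

lemma sqrt2_sq : (Real.sqrt 2 : ℂ) * (Real.sqrt 2 : ℂ) = 2 := by
  norm_cast
  rw [Real.mul_self_sqrt (by norm_num : (0:ℝ) ≤ 2)]

lemma sqrt2_ne : (Real.sqrt 2 : ℂ) ≠ 0 := by
  norm_cast; positivity

-- ### roots of unity
lemma hprim : IsPrimitiveRoot (om n) n := Complex.isPrimitiveRoot_exp n (NeZero.ne n)

lemma om_pow_n : om n ^ n = 1 := (hprim n).pow_eq_one

lemma abs_om : ‖om n‖ = 1 := by
  simp [om, Complex.norm_exp, div_re, mul_re, mul_im]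

lemma om_pow_mod (x : ℕ) : om n ^ (x % n) = om n ^ x := by
  conv_rhs => rw [← Nat.div_add_mod x n]
  rw [pow_add, pow_mul, om_pow_n, one_pow, one_mul]

lemma chi_add (m m' : ZMod n) : chi n (m + m') = chi n m * chi n m' := by
  rw [chi, ZMod.val_add, om_pow_mod, pow_add]; rfl

lemma chi_mul (m m' : ZMod n) : chi n (m * m') = (om n ^ m'.val) ^ m.val := by
  rw [chi, ZMod.val_mul, om_pow_mod, ← pow_mul, mul_comm m.val]

lemma abs_chi (m : ZMod n) : ‖chi n m‖ = 1 := by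
  rw [chi, norm_pow, abs_om, one_pow]

lemma chi_mul_conj (m : ZMod n) : chi n m * (starRingEnd ℂ) (chi n m) = 1 := by
  rw [Complex.mul_conj]
  norm_cast
  rw [Complex.normSq_eq_norm_sq, abs_chi, one_pow]

lemma chi_ne_zero (m : ZMod n) : chi n m ≠ 0 := by
  intro h
  have := abs_chi n m
  rw [h] at this; simp at this

lemma chi_zero : chi n 0 = 1 := by simp [chi]

lemma chi_inj {m m' : ZMod n} (h : chi n m = chi n m') : m = m' := by
  have := (hprim n).pow_inj (ZMod.val_lt m) (ZMod.val_lt m') h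
  exact ZMod.val_injective n this

lemma chi_pow_n (m : ZMod n) : chi n m ^ n = 1 := by
  rw [chi, ← pow_mul, mul_comm, pow_mul, om_pow_n, one_pow]

lemma chi_conj (m : ZMod n) : (starRingEnd ℂ) (chi n m) = chi n (-m) := by
  have h := chi_mul_conj n m
  have h2 : chi n m * chi n (-m) = 1 := by
    rw [← chi_add]; simp [chi_zero]
  exact mul_left_cancel₀ (chi_ne_zero n m) (h.trans h2.symm)

lemma sum_val (f : ℕ → ℂ) : ∑ k : ZMod n, f k.val = ∑ i ∈ Finset.range n, f i := by
  refine Finset.sum_nbij' (fun k => k.val) (fun i => (i : ZMod n)) ?_ ?_ ?_ ?_ ?_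
  · intro a _; exact Finset.mem_range.mpr (ZMod.val_lt a)
  · intro a _; exact Finset.mem_univ _
  · intro a _; simp [ZMod.natCast_val, ZMod.cast_id]
  · intro a ha; exact ZMod.val_cast_of_lt (Finset.mem_range.mp ha)
  · intro a _; rfl

lemma fourierSum (d : ZMod n) (hd : d ≠ 0) : ∑ k : ZMod n, chi n (k * d) = 0 := by
  have hz1 : om n ^ d.val ≠ 1 := by
    intro h
    exact hd (by simpa using chi_inj n (m := d) (m' := 0) (by rw [chi_zero]; exact h))
  calc ∑ k : ZMod n, chi n (k * d) = ∑ k : ZMod n, (om n ^ d.val) ^ k.val := by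
        simp [chi_mul]
    _ = ∑ i ∈ Finset.range n, (om n ^ d.val) ^ i := sum_val n _
    _ = ((om n ^ d.val) ^ n - 1)/(om n ^ d.val - 1) := geom_sum_eq hz1 n
    _ = 0 := by rw [← pow_mul, mul_comm, pow_mul, om_pow_n, one_pow, sub_self, zero_div]

-- ### eigenvalues
lemma tau_sq_le (k : ZMod n) : (tau n k)^2 ≤ 2 := by
  have h := Complex.abs_im_le_norm (chi n k)
  rw [abs_chi] at h
  obtain ⟨h1, h2⟩ := abs_le.mp h
  have : (tau n k)^2 = 2 * (chi n k).im ^ 2 := by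
    rw [tau, mul_pow, Real.sq_sqrt (by norm_num : (0:ℝ) ≤ 2)]
  nlinarith

lemma cc_sq (k : ZMod n) : (cc n k)^2 = 1 - (tau n k)^2/4 := by
  rw [cc, Real.sq_sqrt]; nlinarith [tau_sq_le n k]

lemma cc_pos (k : ZMod n) : 0 < cc n k := by
  rw [cc]; apply Real.sqrt_pos.mpr; nlinarith [tau_sq_le n k]

lemma lam_re (j : ZMod n × Bool) : (lam n j).re = (if j.2 then -(cc n j.1) else (cc n j.1)) := by
  simp [lam]

lemma lam_im (j : ZMod n × Bool) : (lam n j).im = -(tau n j.1)/2 := by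
  simp [lam]; ring

lemma normSq_lam (j : ZMod n × Bool) : normSq (lam n j) = 1 := by
  rw [Complex.normSq_apply, lam_re, lam_im]
  have := cc_sq n j.1
  rcases Bool.eq_false_or_eq_true j.2 with hb|hb <;> rw [hb] <;> simp <;> nlinarith

lemma abs_lam (j : ZMod n × Bool) : ‖lam n j‖ = 1 := by
  have := normSq_lam n j
  rw [Complex.normSq_eq_norm_sq] at this
  nlinarith [norm_nonneg (lam n j)]

lemma lam_ne_zero (j : ZMod n × Bool) : lam n j ≠ 0 := by
  intro h; have := abs_lam n j; rw [h] at this; simp at this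

lemma lam_mul_conj (j : ZMod n × Bool) : (starRingEnd ℂ) (lam n j) * lam n j = 1 := by
  rw [mul_comm, Complex.mul_conj]
  norm_cast
  exact normSq_lam n j

lemma tr_eq (k : ZMod n) : tr n k = -(tau n k : ℂ) * I := by
  rw [tr, div_eq_iff sqrt2_ne]
  have key : (starRingEnd ℂ) (chi n k) - chi n k = ((-2 * (chi n k).im : ℝ) : ℂ) * I := by
    apply Complex.ext <;> simp <;> ring
  rw [key, tau]
  push_cast
  linear_combination (((chi n k).im : ℂ)) * I * sqrt2_sq

lemma quad (j : ZMod n × Bool) : (lam n j)^2 = tr n j.1 * lam n j + 1 := by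
  have hc := cc_sq n j.1
  rw [tr_eq, Complex.ext_iff]
  constructor <;>
    simp only [pow_two, mul_re, mul_im, add_re, add_im, one_re, one_im, neg_re, neg_im,
      I_re, I_im, ofReal_re, ofReal_im, lam_re, lam_im] <;>
    rcases Bool.eq_false_or_eq_true j.2 with hb|hb <;> rw [hb] <;> simp <;> nlinarith

lemma tr_inj (hodd : Odd n) {k k' : ZMod n} (h : tr n k = tr n k') : k = k' := by
  set a := chi n k with ha
  set b := chi n k' with hb
  have hane : a ≠ 0 := chi_ne_zero n k
  have hbne : b ≠ 0 := chi_ne_zero n k'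
  have hca : (starRingEnd ℂ) a = a⁻¹ := eq_inv_of_mul_eq_one_right (chi_mul_conj n k)
  have hcb : (starRingEnd ℂ) b = b⁻¹ := eq_inv_of_mul_eq_one_right (chi_mul_conj n k')
  rw [tr, tr, div_eq_div_iff sqrt2_ne sqrt2_ne, ← ha, ← hb, hca, hcb] at h
  have h2 := mul_right_cancel₀ sqrt2_ne h
  have key : (b - a) * (1 + a*b) = 0 := by
    have hinv_a : a * a⁻¹ = 1 := mul_inv_cancel₀ hane
    have hinv_b : b * b⁻¹ = 1 := mul_inv_cancel₀ hbne
    field_simp at h2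
    linear_combination h2
  rcases mul_eq_zero.mp key with h1|h1
  · exact (chi_inj n (sub_eq_zero.mp h1)).symm
  · exfalso
    have hab : chi n (k + k') = -1 := by
      rw [chi_add, ← ha, ← hb]; linear_combination h1
    have hpn := chi_pow_n n (k + k')
    rw [hab, Odd.neg_one_pow hodd] at hpn
    norm_num at hpn

lemma lam_inj (hodd : Odd n) {j j' : ZMod n × Bool} (h : lam n j = lam n j') : j = j' := by
  obtain ⟨k, b⟩ := j
  obtain ⟨k', b'⟩ := j'
  have hk : k = k' := by
    apply tr_inj n hodd
    have q1 : lam n (k, b) ^ 2 = tr n k * lam n (k, b) + 1 := quad n (k, b)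
    have q2 : lam n (k', b') ^ 2 = tr n k' * lam n (k', b') + 1 := quad n (k', b')
    rw [h] at q1
    have hz : (tr n k - tr n k') * lam n (k', b') = 0 := by linear_combination q2 - q1
    rcases mul_eq_zero.mp hz with h1|h1
    · exact sub_eq_zero.mp h1
    · exact absurd h1 (lam_ne_zero n (k', b'))
  subst hk
  have hre := congrArg Complex.re h
  rw [lam_re, lam_re] at hre
  cases b <;> cases b' <;> simp at hre ⊢ <;> nlinarith [cc_pos n k]

-- ### spinors
lemma lam_true (k : ZMod n) : lam n (k, true) = -(starRingEnd ℂ) (lam n (k, false)) := by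
  apply Complex.ext <;> simp [lam, map_ofNat] <;> ring

lemma qS (k : ZMod n) : (Real.sqrt 2 : ℂ) * (lam n (k, false))^2
    = ((starRingEnd ℂ) (chi n k) - chi n k) * lam n (k, false) + (Real.sqrt 2 : ℂ) := by
  have t2 : tr n k * (Real.sqrt 2 : ℂ) = (starRingEnd ℂ) (chi n k) - chi n k := by
    rw [tr]; field_simp
  have q := quad n (k, false)
  linear_combination (Real.sqrt 2 : ℂ) * q + lam n (k, false) * t2

lemma EaF (k : ZMod n) : chi n k * ((spin n (k, false)).2 - (spin n (k, false)).1)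
    = (Real.sqrt 2 : ℂ) * lam n (k, false) * (spin n (k, false)).1 := by
  simp only [spin]
  ring

lemma EbF (k : ZMod n) : (spin n (k, false)).2 + (spin n (k, false)).1
    = (Real.sqrt 2 : ℂ) * lam n (k, false) * (spin n (k, false)).2 * chi n k := by
  simp only [spin]
  have hu := chi_mul_conj n k
  have hq := qS n k
  have hS := sqrt2_sq
  set S : ℂ := (Real.sqrt 2 : ℂ)
  set a := chi n k
  set l := lam n (k, false)
  linear_combination (-(S*a)) * hq + (-(S*l)) * hu + (-a) * hS

lemma EaT (k : ZMod n) : chi n k * ((spin n (k, true)).2 - (spin n (k, true)).1)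
    = (Real.sqrt 2 : ℂ) * lam n (k, true) * (spin n (k, true)).1 := by
  have hb' := congrArg (starRingEnd ℂ) (EbF n k)
  simp only [map_add, map_mul, Complex.conj_ofReal] at hb'
  simp only [spin, lam_true]
  simp only [spin] at hb' ⊢
  have hu := chi_mul_conj n k
  set S : ℂ := (Real.sqrt 2 : ℂ)
  set a := chi n k
  set l := lam n (k, false)
  set ca := (starRingEnd ℂ) a
  set cl := (starRingEnd ℂ) l
  set cy := (starRingEnd ℂ) (S * l + a)
  linear_combination a * hb' + (S * cl * cy) * hu

lemma EbT (k : ZMod n) : (spin n (k, true)).2 + (spin n (k, true)).1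
    = (Real.sqrt 2 : ℂ) * lam n (k, true) * (spin n (k, true)).2 * chi n k := by
  have ha' := congrArg (starRingEnd ℂ) (EaF n k)
  simp only [map_sub, map_mul, Complex.conj_ofReal] at ha'
  simp only [spin, lam_true]
  simp only [spin] at ha' ⊢
  have hu := chi_mul_conj n k
  set S : ℂ := (Real.sqrt 2 : ℂ)
  set a := chi n k
  set l := lam n (k, false)
  set ca := (starRingEnd ℂ) a
  set cl := (starRingEnd ℂ) l
  set cy := (starRingEnd ℂ) (S * l + a)
  linear_combination (-a) * ha' + (cy - ca) * hu

lemma spinEqA (j : ZMod n × Bool) :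
    chi n j.1 * ((spin n j).2 - (spin n j).1) = (Real.sqrt 2 : ℂ) * lam n j * (spin n j).1 := by
  obtain ⟨k, b⟩ := j; cases b
  · exact EaF n k
  · exact EaT n k

lemma spinEqB (j : ZMod n × Bool) :
    (spin n j).2 + (spin n j).1 = (Real.sqrt 2 : ℂ) * lam n j * (spin n j).2 * chi n j.1 := by
  obtain ⟨k, b⟩ := j; cases b
  · exact EbF n k
  · exact EbT n k

lemma spin_orth (k : ZMod n) :
    (starRingEnd ℂ) (spin n (k, false)).1 * (spin n (k, true)).1
      + (starRingEnd ℂ) (spin n (k, false)).2 * (spin n (k, true)).2 = 0 := by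
  simp only [spin]
  ring

lemma normSq_chi (m : ZMod n) : normSq (chi n m) = 1 := by
  rw [Complex.normSq_eq_norm_sq, abs_chi, one_pow]

lemma mm_true (k : ZMod n) : mm n (k, true) = mm n (k, false) := by
  simp only [mm, spin, normSq_neg, normSq_conj]
  ring

lemma mm_pos (j : ZMod n × Bool) : 0 < mm n j := by
  obtain ⟨k, b⟩ := j
  have h1 : mm n (k, false) > 0 := by
    simp only [mm, spin]
    have := normSq_chi n k
    nlinarith [Complex.normSq_nonneg ((Real.sqrt 2 : ℂ) * lam n (k, false) + chi n k)]
  cases b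
  · exact h1
  · rw [mm_true]; exact h1

lemma spin_complete (k : ZMod n) (z : ℂ × ℂ) :
    ∑ b : Bool, ((((starRingEnd ℂ) (spin n (k, b)).1 * z.1 +
        (starRingEnd ℂ) (spin n (k, b)).2 * z.2) / (mm n (k, b) : ℂ))) • spin n (k, b) = z := by
  rw [Fintype.sum_bool, mm_true]
  have hm : ((mm n (k, false) : ℂ)) ≠ 0 := by
    simp only [ne_eq, ofReal_eq_zero]
    exact ne_of_gt (mm_pos n (k, false))
  simp only [spin]
  set x := chi n k
  set y := (Real.sqrt 2 : ℂ) * lam n (k, false) + chi n k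
  have hmx : (x * (starRingEnd ℂ) x + y * (starRingEnd ℂ) y) = ((mm n (k, false) : ℂ)) := by
    rw [Complex.mul_conj, Complex.mul_conj, mm]
    simp only [spin]
    push_cast
    ring
  apply Prod.ext <;>
    simp only [Prod.smul_fst, Prod.smul_snd, Prod.fst_add, Prod.snd_add, smul_eq_mul] <;>
    rw [div_mul_eq_mul_div, div_mul_eq_mul_div, ← add_div, div_eq_iff hm] <;>
    simp only [map_neg, map_mul, RingHomCompTriple.comp_apply, RingHom.id_apply,
      starRingEnd_self_apply] <;>
    first
      | linear_combination (z.1 : ℂ) * hmx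
      | linear_combination (z.2 : ℂ) * hmx


-- ### eigenvectors of the walk
lemma step_vec (j : ZMod n × Bool) :
    cycleHadamardStep n (vec n j) = fun v => lam n j • vec n j v := by
  funext v
  have h1 : chi n (j.1 * (v + 1)) = chi n (j.1 * v) * chi n j.1 := by
    rw [← chi_add]; ring_nf
  have h2 : chi n (j.1 * v) = chi n (j.1 * (v - 1)) * chi n j.1 := by
    rw [← chi_add]; ring_nf
  have hA := spinEqA n j
  have hB := spinEqB n j
  apply Prod.ext <;>
    simp only [cycleHadamardStep, vec, Prod.smul_fst, Prod.smul_snd, smul_eq_mul] <;>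
    rw [div_eq_iff sqrt2_ne]
  · linear_combination chi n (j.1 * v) * hA + ((spin n j).2 - (spin n j).1) * h1
  · linear_combination chi n (j.1 * (v - 1)) * hB
      - ((Real.sqrt 2 : ℂ) * lam n j * (spin n j).2) * h2

-- ### orthogonality
lemma inn_vec (j j' : ZMod n × Bool) :
    inn n (vec n j) (vec n j') = if j = j' then (n : ℂ) * mm n j else 0 := by
  obtain ⟨k, b⟩ := j
  obtain ⟨k', b'⟩ := j'
  have key : inn n (vec n (k, b)) (vec n (k', b'))
      = (∑ v : ZMod n, chi n ((k' - k) * v)) *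
        ((starRingEnd ℂ) (spin n (k, b)).1 * (spin n (k', b')).1
          + (starRingEnd ℂ) (spin n (k, b)).2 * (spin n (k', b')).2) := by
    rw [inn, Finset.sum_mul]
    refine Finset.sum_congr rfl fun v _ => ?_
    simp only [vec, Prod.smul_fst, Prod.smul_snd, smul_eq_mul, map_mul, chi_conj]
    have : chi n (-(k * v)) * chi n (k' * v) = chi n ((k' - k) * v) := by
      rw [← chi_add]; ring_nf
    linear_combination ((starRingEnd ℂ) (spin n (k, b)).1 * (spin n (k', b')).1
      + (starRingEnd ℂ) (spin n (k, b)).2 * (spin n (k', b')).2) * this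
  rw [key]
  by_cases hk : k = k'
  · subst hk
    have hsum : (∑ v : ZMod n, chi n ((k - k) * v)) = (n : ℂ) := by
      simp [chi_zero]
    rw [hsum]
    by_cases hb : b = b'
    · subst hb
      rw [if_pos rfl]
      congr 1
      simp only [mm]
      push_cast
      rw [mul_comm ((starRingEnd ℂ) (spin n (k, b)).1), Complex.mul_conj,
          mul_comm ((starRingEnd ℂ) (spin n (k, b)).2), Complex.mul_conj]
    · rw [if_neg (by simp [hb])]
      cases b <;> cases b' <;> try simp at hb
      · rw [spin_orth n k, mul_zero]
      · have h0 := spin_orth n k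
        have : (starRingEnd ℂ) (spin n (k, true)).1 * (spin n (k, false)).1
            + (starRingEnd ℂ) (spin n (k, true)).2 * (spin n (k, false)).2 = 0 := by
          have hc := congrArg (starRingEnd ℂ) h0
          simp only [map_add, map_mul, map_zero, Complex.conj_conj] at hc
          linear_combination hc
        rw [this, mul_zero]
  · rw [if_neg (by simp [hk])]
    have hd : k' - k ≠ 0 := sub_ne_zero.mpr (Ne.symm hk)
    have : (∑ v : ZMod n, chi n ((k' - k) * v)) = 0 := by
      rw [← fourierSum n (k' - k) hd]
      refine Finset.sum_congr rfl fun v _ => by rw [mul_comm]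
    rw [this, zero_mul]

-- ### inner product linearity
lemma inn_sum_right {α : Type*} (s : Finset α) (φ : ZMod n → ℂ × ℂ) (f : α → ZMod n → ℂ × ℂ) :
    inn n φ (fun v => ∑ j ∈ s, f j v) = ∑ j ∈ s, inn n φ (f j) := by
  simp only [inn, Prod.fst_sum, Prod.snd_sum, Finset.mul_sum, ← Finset.sum_add_distrib]
  rw [Finset.sum_comm]

lemma inn_sum_left {α : Type*} (s : Finset α) (f : α → ZMod n → ℂ × ℂ) (ψ : ZMod n → ℂ × ℂ) :
    inn n (fun v => ∑ j ∈ s, f j v) ψ = ∑ j ∈ s, inn n (f j) ψ := by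
  simp only [inn, Prod.fst_sum, Prod.snd_sum, map_sum, Finset.sum_mul, ← Finset.sum_add_distrib]
  rw [Finset.sum_comm]

lemma inn_smul_right (φ ψ : ZMod n → ℂ × ℂ) (c : ℂ) :
    inn n φ (fun v => c • ψ v) = c * inn n φ ψ := by
  simp only [inn, Prod.smul_fst, Prod.smul_snd, smul_eq_mul, Finset.mul_sum]
  exact Finset.sum_congr rfl fun v _ => by ring

lemma inn_smul_left (φ ψ : ZMod n → ℂ × ℂ) (c : ℂ) :
    inn n (fun v => c • φ v) ψ = (starRingEnd ℂ) c * inn n φ ψ := by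
  simp only [inn, Prod.smul_fst, Prod.smul_snd, smul_eq_mul, map_mul, Finset.mul_sum]
  exact Finset.sum_congr rfl fun v _ => by ring

-- ### decomposition of the initial state
lemma decomp (ψ₀ : ZMod n → ℂ × ℂ) (v : ZMod n) :
    ∑ j : ZMod n × Bool, coef n ψ₀ j • vec n j v = ψ₀ v := by
  have hn : ((n : ℂ)) ≠ 0 := by
    exact_mod_cast Nat.cast_ne_zero.mpr (NeZero.ne n)
  have hstep : ∀ k : ZMod n, ∑ b : Bool, coef n ψ₀ (k, b) • vec n (k, b) v
      = ∑ w : ZMod n, ((n : ℂ)⁻¹ * chi n (k * (v - w))) • ψ₀ w := by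
    intro k
    have hbody : ∀ b : Bool, coef n ψ₀ (k, b) • vec n (k, b) v
        = ∑ w : ZMod n, ((n : ℂ)⁻¹ * chi n (k * (v - w))) •
            ((((starRingEnd ℂ) (spin n (k, b)).1 * (ψ₀ w).1 +
              (starRingEnd ℂ) (spin n (k, b)).2 * (ψ₀ w).2) / (mm n (k, b) : ℂ)) • spin n (k, b)) := by
      intro b
      have hmm : ((mm n (k, b) : ℂ)) ≠ 0 := by
        simp only [ne_eq, ofReal_eq_zero]
        exact ne_of_gt (mm_pos n (k, b))
      rw [coef, inn, Finset.sum_div, Finset.sum_smul]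
      refine Finset.sum_congr rfl fun w _ => ?_
      simp only [vec, Prod.smul_fst, Prod.smul_snd, smul_eq_mul, map_mul, chi_conj]
      rw [smul_smul, smul_smul]
      refine congrArg (fun z : ℂ => z • spin n (k, b)) ?_
      have hchi2 : chi n (k * (v - w)) = chi n (k * v) * chi n (-(k * w)) := by
        rw [← chi_add]; ring_nf
      rw [hchi2]
      field_simp
    rw [Fintype.sum_bool, hbody true, hbody false, ← Finset.sum_add_distrib]
    refine Finset.sum_congr rfl fun w _ => ?_
    rw [← smul_add]
    congr 1
    have := spin_complete n k (ψ₀ w)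
    rw [Fintype.sum_bool] at this
    exact this
  rw [Fintype.sum_prod_type, Finset.sum_congr rfl fun k _ => hstep k, Finset.sum_comm]
  rw [Finset.sum_eq_single v]
  · rw [← Finset.sum_smul, ← Finset.mul_sum]
    have : ∀ k : ZMod n, chi n (k * (v - v)) = 1 := by
      intro k; simp [chi_zero]
    rw [Finset.sum_congr rfl fun k _ => this k]
    simp [Finset.card_univ, inv_mul_cancel₀ hn]
  · intro w _ hw
    rw [← Finset.sum_smul, ← Finset.mul_sum]
    have hd : v - w ≠ 0 := sub_ne_zero.mpr (Ne.symm hw)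
    have : (∑ k : ZMod n, chi n (k * (v - w))) = 0 := fourierSum n (v - w) hd
    rw [this, mul_zero, zero_smul]
  · intro h; exact absurd (Finset.mem_univ v) h

-- ### Parseval
lemma parseval (ψ₀ : ZMod n → ℂ × ℂ) :
    ∑ j : ZMod n × Bool, ((normSq (coef n ψ₀ j) : ℂ) * ((n : ℂ) * (mm n j : ℂ))) = inn n ψ₀ ψ₀ := by
  have hψ : ψ₀ = fun v => ∑ j : ZMod n × Bool, coef n ψ₀ j • vec n j v :=
    funext fun v => (decomp n ψ₀ v).symm
  conv_rhs => rw [hψ]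
  rw [inn_sum_right]
  refine (Finset.sum_congr rfl fun j _ => ?_).symm
  rw [inn_smul_right, inn_sum_left]
  have hterm : ∀ j' : ZMod n × Bool, inn n (fun v => coef n ψ₀ j' • vec n j' v) (vec n j)
      = (starRingEnd ℂ) (coef n ψ₀ j') * (if j' = j then (n : ℂ) * mm n j' else 0) := fun j' => by
    rw [inn_smul_left, inn_vec]
  rw [Finset.sum_congr rfl fun j' _ => hterm j', Finset.sum_eq_single j]
  · rw [if_pos rfl, ← mul_assoc, Complex.mul_conj]
  · intro j' _ hj'; rw [if_neg hj', mul_zero]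
  · intro h; exact absurd (Finset.mem_univ j) h

-- ### linearity and iteration
lemma step_sum (c : ZMod n × Bool → ℂ) :
    cycleHadamardStep n (fun v => ∑ j : ZMod n × Bool, c j • vec n j v)
      = fun v => ∑ j : ZMod n × Bool, c j • (lam n j • vec n j v) := by
  funext v
  have h : ∀ j : ZMod n × Bool, cycleHadamardStep n (vec n j) v = lam n j • vec n j v :=
    fun j => congrFun (step_vec n j) v
  apply Prod.ext
  · simp only [cycleHadamardStep, Prod.fst_sum, Prod.snd_sum, Prod.smul_fst, Prod.smul_snd,
      smul_eq_mul]
    rw [← Finset.sum_sub_distrib, Finset.sum_div]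
    refine Finset.sum_congr rfl fun j _ => ?_
    have hj := congrArg Prod.fst (h j)
    simp only [cycleHadamardStep, Prod.smul_fst, smul_eq_mul] at hj
    rw [← mul_sub, mul_div_assoc, hj]
  · simp only [cycleHadamardStep, Prod.fst_sum, Prod.snd_sum, Prod.smul_fst, Prod.smul_snd,
      smul_eq_mul]
    rw [← Finset.sum_add_distrib, Finset.sum_div]
    refine Finset.sum_congr rfl fun j _ => ?_
    have hj := congrArg Prod.snd (h j)
    simp only [cycleHadamardStep, Prod.smul_snd, smul_eq_mul] at hj
    rw [← mul_add, mul_div_assoc, hj]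

lemma iterate_step (ψ₀ : ZMod n → ℂ × ℂ) (t : ℕ) :
    (cycleHadamardStep n)^[t] ψ₀ = fun v => ∑ j : ZMod n × Bool,
      (coef n ψ₀ j * lam n j ^ t) • vec n j v := by
  induction t with
  | zero =>
      simp only [Function.iterate_zero, id_eq, pow_zero, mul_one]
      exact (funext (decomp n ψ₀)).symm
  | succ t ih =>
      rw [Function.iterate_succ_apply', ih, step_sum]
      funext v
      refine Finset.sum_congr rfl fun j _ => ?_
      rw [smul_smul]
      refine congrArg (fun z : ℂ => z • vec n j v) ?_
      rw [pow_succ]; ring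

end CHW


open CHW Complex in
theorem cycle_hadamard_time_averaged_uniform
    (n : ℕ) [NeZero n] (hodd : Odd n)
    (ψ₀ : ZMod n → ℂ × ℂ)
    (hunit : ∑ v : ZMod n, (‖(ψ₀ v).1‖ ^ 2 + ‖(ψ₀ v).2‖ ^ 2) = 1) :
    ∀ v : ZMod n,
      Tendsto (fun T : ℕ =>
          (T : ℝ)⁻¹ * ∑ t ∈ Finset.range T,
            (‖((cycleHadamardStep n)^[t] ψ₀ v).1‖ ^ 2 +
              ‖((cycleHadamardStep n)^[t] ψ₀ v).2‖ ^ 2))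
        atTop (𝓝 (1 / (n : ℝ))) := by
  intro v
  classical
  set c : ZMod n × Bool → ℂ := coef n ψ₀ with hc
  set g : (ZMod n × Bool) × (ZMod n × Bool) → ℂ := fun p =>
    (starRingEnd ℂ) (c p.1) * c p.2 *
      ((starRingEnd ℂ) (vec n p.1 v).1 * (vec n p.2 v).1 +
       (starRingEnd ℂ) (vec n p.1 v).2 * (vec n p.2 v).2) with hg
  set μ : (ZMod n × Bool) × (ZMod n × Bool) → ℂ := fun p =>
    (starRingEnd ℂ) (lam n p.1) * lam n p.2 with hμ
  have hz : ∀ z : ℂ, ‖z‖^2 = ((starRingEnd ℂ) z * z).re := fun z => by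
    rw [Complex.sq_norm, mul_comm, Complex.mul_conj, Complex.ofReal_re]
  have hcz : ∀ z : ℂ, (starRingEnd ℂ) z * z = ((normSq z : ℝ) : ℂ) := fun z => by
    rw [mul_comm, Complex.mul_conj]
  -- step 1: pointwise formula for the node distribution
  have hP : ∀ t : ℕ,
      ‖((cycleHadamardStep n)^[t] ψ₀ v).1‖^2 + ‖((cycleHadamardStep n)^[t] ψ₀ v).2‖^2
      = (∑ p : (ZMod n × Bool) × (ZMod n × Bool), μ p ^ t * g p).re := by
    intro t
    have e1 := congrFun (iterate_step n ψ₀ t) v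
    rw [e1, hz, hz, ← Complex.add_re]
    congr 1
    simp only [Prod.fst_sum, Prod.snd_sum, Prod.smul_fst, Prod.smul_snd, smul_eq_mul]
    conv_rhs => rw [Fintype.sum_prod_type]
    rw [map_sum, map_sum, Finset.sum_mul_sum, Finset.sum_mul_sum, ← Finset.sum_add_distrib]
    apply Finset.sum_congr rfl
    intro j _
    rw [← Finset.sum_add_distrib]
    apply Finset.sum_congr rfl
    intro j' _
    simp only [hg, hμ, map_mul, map_pow]
    ring
  -- step 2: Cesàro average formula
  have hseq : ∀ T : ℕ,
      (T : ℝ)⁻¹ * ∑ t ∈ Finset.range T,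
        (‖((cycleHadamardStep n)^[t] ψ₀ v).1‖^2 + ‖((cycleHadamardStep n)^[t] ψ₀ v).2‖^2)
      = (∑ p : (ZMod n × Bool) × (ZMod n × Bool),
          ((T : ℂ)⁻¹ * ∑ t ∈ Finset.range T, μ p ^ t) * g p).re := by
    intro T
    rw [Finset.sum_congr rfl (fun t _ => hP t), ← Complex.re_sum, ← Complex.re_ofReal_mul]
    congr 1
    push_cast
    rw [Finset.sum_comm, Finset.mul_sum]
    refine Finset.sum_congr rfl fun p _ => ?_
    rw [mul_assoc, Finset.sum_mul]
  -- step 3: the limit of the Cesàro factors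
  have hfac : ∀ p : (ZMod n × Bool) × (ZMod n × Bool),
      Tendsto (fun T : ℕ => (T : ℂ)⁻¹ * ∑ t ∈ Finset.range T, μ p ^ t) atTop
        (𝓝 (if p.1 = p.2 then 1 else 0)) := by
    intro p
    by_cases hp : p.1 = p.2
    · rw [if_pos hp]
      have hμ1 : μ p = 1 := by rw [hμ]; simp only [hp]; exact lam_mul_conj n p.2
      apply Tendsto.congr' _ tendsto_const_nhds
      filter_upwards [eventually_ge_atTop 1] with T hT
      have hT0 : (T : ℂ) ≠ 0 := Nat.cast_ne_zero.mpr (by omega)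
      rw [hμ1]
      simp [inv_mul_cancel₀ hT0]
    · rw [if_neg hp]
      have hμne : μ p ≠ 1 := by
        intro h1
        apply hp
        have h2 : (starRingEnd ℂ) (lam n p.1) * lam n p.1 = 1 := lam_mul_conj n p.1
        have h3 : lam n p.1 = lam n p.2 := by
          have hc0 : (starRingEnd ℂ) (lam n p.1) ≠ 0 := by
            simp only [ne_eq, map_eq_zero]
            exact lam_ne_zero n p.1
          rw [hμ] at h1
          exact mul_left_cancel₀ hc0 (h2.trans h1.symm)
        exact lam_inj n hodd h3
      have habsμ : ‖μ p‖ = 1 := by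
        rw [hμ, norm_mul, Complex.norm_conj,
          abs_lam, abs_lam, one_mul]
      have hbound : ∀ T : ℕ,
          ‖(T : ℂ)⁻¹ * ∑ t ∈ Finset.range T, μ p ^ t‖
            ≤ (T : ℝ)⁻¹ * (2 / ‖μ p - 1‖) := by
        intro T
        rw [norm_mul, norm_inv, Complex.norm_natCast]
        gcongr
        rw [geom_sum_eq hμne, norm_div]
        gcongr
        · exact norm_sub_le _ _ |>.trans (by rw [norm_pow, habsμ, one_pow, norm_one]; norm_num)
      have hto : Tendsto (fun T : ℕ => (T : ℝ)⁻¹ * (2 / ‖μ p - 1‖)) atTop (𝓝 0) := by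
        simpa using tendsto_inv_atTop_nhds_zero_nat.mul_const (2 / ‖μ p - 1‖)
      exact squeeze_zero_norm hbound hto
  -- step 4: the limit value
  have hinn : inn n ψ₀ ψ₀ = 1 := by
    rw [inn]
    have hterm : ∀ w, (starRingEnd ℂ) (ψ₀ w).1 * (ψ₀ w).1 + (starRingEnd ℂ) (ψ₀ w).2 * (ψ₀ w).2
        = ((‖(ψ₀ w).1‖^2 + ‖(ψ₀ w).2‖^2 : ℝ) : ℂ) := fun w => by
      rw [hcz, hcz, Complex.sq_norm, Complex.sq_norm]
      push_cast
      ring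
    rw [Finset.sum_congr rfl fun w _ => hterm w, ← Complex.ofReal_sum, hunit,
      Complex.ofReal_one]
  have hL : (∑ p : (ZMod n × Bool) × (ZMod n × Bool),
      (if p.1 = p.2 then (1:ℂ) else 0) * g p) = ((1 / n : ℝ) : ℂ) := by
    have hdiag : ∀ j : ZMod n × Bool, g (j, j) = ((normSq (c j) * mm n j : ℝ) : ℂ) := by
      intro j
      rw [hg]
      simp only
      rw [hcz (c j), hcz, hcz]
      simp only [vec, Prod.smul_fst, Prod.smul_snd, smul_eq_mul, normSq_mul, normSq_chi n,
        one_mul, mm]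
      push_cast
      ring
    have hsum1 : (∑ p : (ZMod n × Bool) × (ZMod n × Bool),
        (if p.1 = p.2 then (1:ℂ) else 0) * g p) = ∑ j : ZMod n × Bool, g (j, j) := by
      rw [Fintype.sum_prod_type]
      refine Finset.sum_congr rfl fun j _ => ?_
      simp [Finset.sum_ite_eq]
    rw [hsum1, Finset.sum_congr rfl fun j _ => hdiag j]
    have hpars := parseval n ψ₀
    rw [hinn] at hpars
    have hn : ((n : ℂ)) ≠ 0 := Nat.cast_ne_zero.mpr (NeZero.ne n)
    have hfact : (n : ℂ) * (∑ j : ZMod n × Bool, ((normSq (c j) * mm n j : ℝ) : ℂ)) = 1 := by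
      rw [Finset.mul_sum, ← hpars]
      refine Finset.sum_congr rfl fun j _ => ?_
      push_cast
      ring
    push_cast at hfact ⊢
    field_simp
    linear_combination hfact
  -- step 5: conclusion
  have htend : Tendsto (fun T : ℕ => ∑ p : (ZMod n × Bool) × (ZMod n × Bool),
      ((T : ℂ)⁻¹ * ∑ t ∈ Finset.range T, μ p ^ t) * g p) atTop (𝓝 ((1 / n : ℝ) : ℂ)) := by
    rw [← hL]
    exact tendsto_finset_sum _ fun p _ => (hfac p).mul_const (g p)
  have hre : Tendsto (fun T : ℕ => (∑ p : (ZMod n × Bool) × (ZMod n × Bool),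
      ((T : ℂ)⁻¹ * ∑ t ∈ Finset.range T, μ p ^ t) * g p).re) atTop (𝓝 (1 / (n:ℝ))) := by
    have h2 := (Complex.continuous_re.tendsto _).comp htend
    rw [Complex.ofReal_re] at h2
    exact h2
  exact Tendsto.congr (fun T => (hseq T).symm) hre
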